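/- Let G be a self-similar, level-transitive, regular branch subgroup of Aut(X*). Then there exists n ≥ 0 such that X^m * G_# ≥ rist_G(m+n) for all m ≥ 0, i.e. the n-th level copies of the maximal branching subgroup eventually contain the rigid level stabilizers. -/

import Mathlib

open List

/-- Vertices of the regular rooted tree over alphabet `X`: finite words. -/
abbrev Vtx (X : Type*) := List X

section Tree

variable {X : Type*} [DecidableEq X]

/-- A permutation of the vertex set is a rooted-tree automorphism if it fixes the
root and maps children of a vertex to children of its image. -/
def IsTreeAut (f : Equiv.Perm (Vtx X)) : Prop :=
  f [] = [] ∧ ∀ (w : Vtx X) (x : X), ∃ y : X, f (w ++ [x]) = f w ++ [y]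

/-- The state (section) of `f` at the vertex `w`, as a function on vertices. -/
def stateFun (f : Equiv.Perm (Vtx X)) (w : Vtx X) : Vtx X → Vtx X :=
  fun t => (f (w ++ t)).drop w.length

/-- The rigid stabilizer of the vertex `v` in the full automorphism group:
all permutations moving only (proper or improper) descendants of `v`. -/
def rist (v : Vtx X) : Subgroup (Equiv.Perm (Vtx X)) where
  carrier := {g | ∀ w : Vtx X, ¬ v <+: w → g w = w}
  one_mem' := by intro w _; rfl
  mul_mem' := by
    intro a b ha hb w hw
    have : (a * b) w = a (b w) := rfl
    rw [this, hb w hw, ha w hw]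
  inv_mem' := by
    intro a ha w hw
    have h := ha w hw
    conv_lhs => rw [← h]
    exact Equiv.symm_apply_apply a w

/-- The rigid stabilizer of `v` in `G`. -/
def ristG (G : Subgroup (Equiv.Perm (Vtx X))) (v : Vtx X) :
    Subgroup (Equiv.Perm (Vtx X)) :=
  rist v ⊓ G

/-- The `n`-th level rigid stabilizer of `G`: the subgroup generated by the
rigid stabilizers of all vertices of level `n`. -/
def ristLevel (G : Subgroup (Equiv.Perm (Vtx X))) (n : ℕ) :
    Subgroup (Equiv.Perm (Vtx X)) :=
  ⨆ v ∈ {v : Vtx X | v.length = n}, ristG G v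

/-- The `n`-th level stabilizer of `G`: elements fixing all vertices of level `≤ n`. -/
def stabLevel (G : Subgroup (Equiv.Perm (Vtx X))) (n : ℕ) :
    Subgroup (Equiv.Perm (Vtx X)) :=
  G ⊓ { carrier := {g | ∀ w : Vtx X, w.length ≤ n → g w = w}
        one_mem' := by intro w _; rfl
        mul_mem' := by
          intro a b ha hb w hw
          have : (a * b) w = a (b w) := rfl
          rw [this, hb w hw, ha w hw]
        inv_mem' := by
          intro a ha w hw
          have h := ha w hw
          conv_lhs => rw [← h]
          exact Equiv.symm_apply_apply a w }

/-- Underlying function of the vtr `v*g`. -/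
def vtrFun (v : Vtx X) (g : Vtx X → Vtx X) : Vtx X → Vtx X :=
  fun w => if v <+: w then v ++ g (w.drop v.length) else w

lemma vtr_aux (v : Vtx X) (g h : Vtx X → Vtx X)
    (hgh : ∀ t, h (g t) = t) (w : Vtx X) :
    vtrFun v h (vtrFun v g w) = w := by
  by_cases hp : v <+: w
  · obtain ⟨t, rfl⟩ := hp
    simp [vtrFun, List.drop_left, hgh, List.prefix_append]
  · simp [vtrFun, hp]

/-- The vtr `v*g`: the automorphism acting as `g` on the subtree rooted
at `v` and trivially elsewhere. -/
def vtr (v : Vtx X) (g : Equiv.Perm (Vtx X)) : Equiv.Perm (Vtx X) where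
  toFun := vtrFun v g
  invFun := vtrFun v g.symm
  left_inv := vtr_aux v g g.symm fun t => g.symm_apply_apply t
  right_inv := vtr_aux v g.symm g fun t => g.apply_symm_apply t

lemma vtr_apply (v : Vtx X) (g : Equiv.Perm (Vtx X)) (w : Vtx X) :
    vtr v g w = if v <+: w then v ++ g (w.drop v.length) else w := rfl

/-- `g ↦ v*g` as a group homomorphism. -/
def vtrHom (v : Vtx X) : Equiv.Perm (Vtx X) →* Equiv.Perm (Vtx X) where
  toFun := vtr v
  map_one' := by
    ext w
    by_cases hp : v <+: w
    · obtain ⟨t, rfl⟩ := hp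
      simp [vtr, vtrFun, List.drop_left, List.prefix_append]
    · simp [vtr, vtrFun, hp]
  map_mul' := by
    intro a b
    ext w
    have hmul : (vtr v a * vtr v b) w = vtr v a (vtr v b w) := rfl
    rw [hmul]
    by_cases hp : v <+: w
    · obtain ⟨t, rfl⟩ := hp
      simp [vtr, vtrFun, List.drop_left, List.prefix_append]
    · simp [vtr, vtrFun, hp]

/-- `K` is a branching subgroup of `G`: `K ≤ G` and `v*K ≤ K` for all vertices. -/
def IsBranching (G K : Subgroup (Equiv.Perm (Vtx X))) : Prop :=
  K ≤ G ∧ ∀ v : Vtx X, ∀ g ∈ K, vtr v g ∈ K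

/-- The product `X^n * K` of the translates `v*K` over all vertices of level `n`. -/
def levelProd (K : Subgroup (Equiv.Perm (Vtx X))) (n : ℕ) :
    Subgroup (Equiv.Perm (Vtx X)) :=
  Subgroup.closure {p | ∃ v : Vtx X, v.length = n ∧ ∃ g ∈ K, p = vtr v g}

/-- The group `G⋉v` of states at `v` of the rigid stabilizer:
those `g ∈ G` with `v*g ∈ G`. -/
def pristSub (G : Subgroup (Equiv.Perm (Vtx X))) (v : Vtx X) :
    Subgroup (Equiv.Perm (Vtx X)) :=
  G ⊓ G.comap (vtrHom v)

/-- `G_#`, the intersection of all `G⋉v` (the maximal branching subgroup when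
`G` is regular branch). -/
def Gsharp (G : Subgroup (Equiv.Perm (Vtx X))) : Subgroup (Equiv.Perm (Vtx X)) :=
  ⨅ v : Vtx X, pristSub G v

/-- `G` is self-similar: all states of elements of `G` are (induced by) elements of `G`. -/
def SelfSimilar (G : Subgroup (Equiv.Perm (Vtx X))) : Prop :=
  ∀ g ∈ G, ∀ w : Vtx X, ∃ h ∈ G, ∀ t : Vtx X, h t = stateFun g w t

/-- `G` is level-transitive: transitive on each level of the tree. -/
def LevelTransitive (G : Subgroup (Equiv.Perm (Vtx X))) : Prop :=
  ∀ v w : Vtx X, v.length = w.length → ∃ g ∈ G, g v = w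

/-- `G` is recurrent: the state at `v` of the stabilizer of `v` is all of `G`. -/
def Recurrent (G : Subgroup (Equiv.Perm (Vtx X))) : Prop :=
  ∀ v : Vtx X, ∀ h : Equiv.Perm (Vtx X),
    (h ∈ G ↔ ∃ g ∈ G, g v = v ∧ ∀ t : Vtx X, h t = stateFun g v t)

/-- `G` is a regular branch group (for this action): it has a non-trivial
branching subgroup `K` with all products `X^n*K` of finite index in `G`. -/
def RegularBranch (G : Subgroup (Equiv.Perm (Vtx X))) : Prop :=
  ∃ K : Subgroup (Equiv.Perm (Vtx X)), IsBranching G K ∧ K ≠ ⊥ ∧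
    ∀ n : ℕ, ((levelProd K n).subgroupOf G).FiniteIndex

/-- The subgroup generated by `e`-th powers of elements of `H`. -/
def powSubgroup {P : Type*} [Group P] (H : Subgroup P) (e : ℕ) : Subgroup P :=
  Subgroup.closure {x | ∃ h ∈ H, x = h ^ e}

/-- The normal closure of `g` in the subgroup `Γ`. -/
def nclosure {P : Type*} [Group P] (Γ : Subgroup P) (g : P) : Subgroup P :=
  Subgroup.closure {x | ∃ h ∈ Γ, x = h * g * h⁻¹}

/-- `g` is finite-state: it has only finitely many states. -/
def FiniteState (g : Equiv.Perm (Vtx X)) : Prop :=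
  {f : Vtx X → Vtx X | ∃ w : Vtx X, f = stateFun g w}.Finite

/-- `g` fixes the boundary ray `y`, i.e. it fixes each of its finite prefixes. -/
def fixesRay (g : Equiv.Perm (Vtx X)) (y : ℕ → X) : Prop :=
  ∀ n : ℕ, g ((List.range n).map y) = (List.range n).map y

end Tree

/-- A group satisfies a (non-trivial) group law. -/
def SatisfiesLaw (G : Type*) [Group G] : Prop :=
  ∃ w : FreeGroup ℕ, w ≠ 1 ∧ ∀ φ : FreeGroup ℕ →* G, φ w = 1


section Aux
set_option linter.unusedSectionVars false
variable {X : Type*} [DecidableEq X]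

lemma IsTreeAut.length_eq {f : Equiv.Perm (Vtx X)} (hf : IsTreeAut f) :
    ∀ z : Vtx X, (f z).length = z.length := by
  intro z
  induction z using List.reverseRecOn with
  | nil => rw [hf.1]
  | append_singleton w x ih =>
      obtain ⟨y, hy⟩ := hf.2 w x
      rw [hy]; simp [ih]

lemma IsTreeAut.append_eq {f : Equiv.Perm (Vtx X)} (hf : IsTreeAut f) (w t : Vtx X) :
    f (w ++ t) = f w ++ stateFun f w t := by
  have hpre : f w <+: f (w ++ t) := by
    induction t using List.reverseRecOn with
    | nil => simp
    | append_singleton r x ih =>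
        obtain ⟨y, hy⟩ := hf.2 (w ++ r) x
        rw [← List.append_assoc, hy]
        exact ih.trans ⟨[y], rfl⟩
  obtain ⟨r, hr⟩ := hpre
  have hl : (f w).length = w.length := hf.length_eq w
  show f (w ++ t) = f w ++ (f (w ++ t)).drop w.length
  rw [← hr, ← hl, List.drop_left]

lemma IsTreeAut.prefix_mono {f : Equiv.Perm (Vtx X)} (hf : IsTreeAut f)
    {w z : Vtx X} (h : w <+: z) : f w <+: f z := by
  obtain ⟨t, rfl⟩ := h
  rw [hf.append_eq]
  exact ⟨_, rfl⟩

lemma vtr_nil (g : Equiv.Perm (Vtx X)) : vtr ([] : Vtx X) g = g := by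
  refine Equiv.ext fun z => ?_
  rw [vtr_apply]
  simp

lemma drop_append_len (u v t : Vtx X) :
    (u ++ t).drop (u ++ v).length = t.drop v.length := by
  rw [List.length_append, List.drop_length_add_append]

lemma vtr_comp (u v : Vtx X) (h : Equiv.Perm (Vtx X)) :
    vtr u (vtr v h) = vtr (u ++ v) h := by
  refine Equiv.ext fun z => ?_
  rw [vtr_apply u, vtr_apply (u ++ v)]
  by_cases h1 : u <+: z
  · obtain ⟨r, rfl⟩ := h1
    rw [if_pos (List.prefix_append u r), List.drop_left, vtr_apply v]
    by_cases h2 : v <+: r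
    · rw [if_pos h2, if_pos ((List.prefix_append_right_inj u).mpr h2),
        drop_append_len, List.append_assoc]
    · rw [if_neg h2, if_neg (fun hc => h2 ((List.prefix_append_right_inj u).mp hc))]
  · rw [if_neg h1, if_neg (fun hc => h1 ((List.prefix_append u v).trans hc))]

lemma rist_fixed {f : Equiv.Perm (Vtx X)} (hf : IsTreeAut f) {w : Vtx X} (hw : w ≠ [])
    (hr : ∀ z : Vtx X, ¬ w <+: z → f z = z) : f w = w := by
  obtain ⟨p, x, rfl⟩ : ∃ p x, w = p ++ [x] :=
    ⟨w.dropLast, w.getLast hw, (List.dropLast_append_getLast hw).symm⟩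
  have hp : f p = p := hr p (fun hc => by have := hc.length_le; simp at this)
  obtain ⟨y, hy⟩ := hf.2 p x
  have h2 : f (p ++ [x]) = p ++ [y] := by rw [hy, hp]
  by_cases hxy : y = x
  · rw [h2, hxy]
  · exfalso
    have h1 : f (p ++ [y]) = p ++ [y] := by
      refine hr _ (fun hc => ?_)
      have := hc.eq_of_length (by simp)
      simp only [List.append_cancel_left_eq, List.cons.injEq] at this
      exact hxy this.1.symm
    have := f.injective (h2.trans h1.symm)
    simp only [List.append_cancel_left_eq, List.cons.injEq] at this
    exact hxy this.1.symm

lemma vtr_suffix_mem {G : Subgroup (Equiv.Perm (Vtx X))} (hSS : SelfSimilar G)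
    (u v : Vtx X) (h : Equiv.Perm (Vtx X)) (hm : vtr (u ++ v) h ∈ G) :
    vtr v h ∈ G := by
  obtain ⟨h', hh'G, hh'⟩ := hSS _ hm u
  have heq : vtr v h = h' := by
    refine Equiv.ext fun t => ?_
    rw [hh' t]
    show vtr v h t = ((vtr (u ++ v) h) (u ++ t)).drop u.length
    rw [vtr_apply v, vtr_apply (u ++ v)]
    by_cases h2 : v <+: t
    · rw [if_pos h2, if_pos ((List.prefix_append_right_inj u).mpr h2),
        drop_append_len, List.append_assoc, List.drop_left]
    · rw [if_neg h2, if_neg (fun hc => h2 ((List.prefix_append_right_inj u).mp hc)),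
        List.drop_left]
  rw [heq]; exact hh'G

lemma rist_eq_vtr {G : Subgroup (Equiv.Perm (Vtx X))} (hAut : ∀ g ∈ G, IsTreeAut g)
    (hSS : SelfSimilar G) {g : Equiv.Perm (Vtx X)} (hg : g ∈ G)
    {w : Vtx X} (hw : w ≠ []) (hr : ∀ z : Vtx X, ¬ w <+: z → g z = z) :
    ∃ h, g = vtr w h := by
  obtain ⟨h, hhG, hh⟩ := hSS g hg w
  refine ⟨h, ?_⟩
  have hfix : g w = w := rist_fixed (hAut g hg) hw hr
  refine Equiv.ext fun z => ?_
  rw [vtr_apply]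
  by_cases hp : w <+: z
  · obtain ⟨t, rfl⟩ := hp
    rw [if_pos (List.prefix_append _ _), List.drop_left, hh t,
      (hAut g hg).append_eq w t, hfix]
  · rw [if_neg hp, hr z hp]

lemma conj_vtr {G : Subgroup (Equiv.Perm (Vtx X))} (hAut : ∀ g ∈ G, IsTreeAut g)
    {f : Equiv.Perm (Vtx X)} (hf : f ∈ G)
    (w : Vtx X) {s : Equiv.Perm (Vtx X)} (hs : ∀ t, s t = stateFun f w t)
    (h : Equiv.Perm (Vtx X)) :
    f * vtr w h * f⁻¹ = vtr (f w) (s * h * s⁻¹) := by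
  have hfA := hAut f hf
  have hfiA := hAut f⁻¹ (inv_mem hf)
  refine Equiv.ext fun z => ?_
  have lhs : (f * vtr w h * f⁻¹) z = f (vtr w h (f⁻¹ z)) := rfl
  rw [lhs, vtr_apply (f w)]
  by_cases hp : f w <+: z
  · obtain ⟨r, rfl⟩ := hp
    rw [if_pos (List.prefix_append _ _)]
    have e1 : f⁻¹ (f w ++ r) = w ++ stateFun f⁻¹ (f w) r := by
      rw [hfiA.append_eq, Equiv.Perm.coe_inv, Equiv.symm_apply_apply]
    set r₂ := stateFun f⁻¹ (f w) r with hr₂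
    have hsr : s r₂ = r := by
      rw [hs r₂]
      show (f (w ++ r₂)).drop w.length = r
      rw [← e1, Equiv.Perm.coe_inv, Equiv.apply_symm_apply, ← hfA.length_eq w, List.drop_left]
    have hsinv : s⁻¹ r = r₂ := by
      rw [← hsr]; exact Equiv.symm_apply_apply s r₂
    rw [e1, vtr_apply, if_pos (List.prefix_append _ _), List.drop_left,
      hfA.append_eq w (h r₂), ← hs (h r₂), List.drop_left]
    show f w ++ s (h r₂) = f w ++ s (h (s⁻¹ r))
    rw [hsinv]
  · rw [if_neg hp]
    have hnp : ¬ w <+: f⁻¹ z := by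
      intro hc
      have := hfA.prefix_mono hc
      rw [Equiv.Perm.coe_inv, Equiv.apply_symm_apply] at this
      exact hp this
    rw [vtr_apply, if_neg hnp, Equiv.Perm.coe_inv, Equiv.apply_symm_apply]

end Aux

/-- the level copies of `G_#` eventually contain the rigid level
stabilizers: there is `n` with `X^m * G_# ≥ rist_G(m+n)` for all `m`. -/
theorem Gsharp_contains_rist_shifted
    {X : Type*} [DecidableEq X] [Fintype X]
    (G : Subgroup (Equiv.Perm (Vtx X))) (hAut : ∀ g ∈ G, IsTreeAut g)
    (hSS : SelfSimilar G) (hLT : LevelTransitive G) (hRB : RegularBranch G) :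
    ∃ n : ℕ, ∀ m : ℕ, ristLevel G (m + n) ≤ levelProd (Gsharp G) m := by
  classical
  by_cases hX : IsEmpty X
  · refine ⟨1, fun m => ?_⟩
    have hz : ∀ z : Vtx X, z = [] := by
      intro z
      cases z with
      | nil => rfl
      | cons a _ => exact (hX.false a).elim
    have hsub : Subsingleton (Equiv.Perm (Vtx X)) :=
      ⟨fun a b => Equiv.ext fun z => by rw [hz (a z), hz (b z)]⟩
    intro g _
    rw [Subsingleton.elim g 1]
    exact one_mem _
  · obtain ⟨x₀⟩ := not_isEmpty_iff.mp hX
    obtain ⟨K, ⟨hKG, hKbr⟩, -, hKfi⟩ := hRB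
    -- K ≤ Gsharp G
    have hKsharp : K ≤ Gsharp G := by
      intro k hk
      refine Subgroup.mem_iInf.mpr fun v => ?_
      exact Subgroup.mem_inf.mpr ⟨hKG hk, Subgroup.mem_comap.mpr (hKG (hKbr v k hk))⟩
    -- levelProd K 0 = K
    have hlp0 : levelProd K 0 = K := by
      rw [levelProd]
      have hset : {p | ∃ v : Vtx X, v.length = 0 ∧ ∃ g ∈ K, p = vtr v g} = (K : Set _) := by
        ext p
        constructor
        · rintro ⟨v, hv, g, hgK, rfl⟩
          have hv0 : v = [] := List.length_eq_zero_iff.mp hv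
          subst hv0
          rw [vtr_nil]
          exact hgK
        · intro hp
          exact ⟨[], rfl, p, hp, (vtr_nil p).symm⟩
      rw [hset, Subgroup.closure_eq]
    have hKfi0 : (K.subgroupOf G).FiniteIndex := by
      have := hKfi 0; rwa [hlp0] at this
    have hGfi : ((Gsharp G).subgroupOf G).FiniteIndex := by
      haveI := hKfi0
      exact Subgroup.finiteIndex_of_le
        (show K.subgroupOf G ≤ (Gsharp G).subgroupOf G from Subgroup.comap_mono hKsharp)
    -- the subgroups R w
    set R : Vtx X → Subgroup (Equiv.Perm (Vtx X)) :=
      fun w => Subgroup.comap (vtrHom w) G with hR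
    have hRmem : ∀ (w : Vtx X) (h : Equiv.Perm (Vtx X)), h ∈ R w ↔ vtr w h ∈ G := by
      intro w h; rfl
    have hRdrop : ∀ u v : Vtx X, R (u ++ v) ≤ R v := by
      intro u v h hm
      exact (hRmem v h).mpr (vtr_suffix_mem hSS u v h ((hRmem _ h).mp hm))
    have hsharpR : ∀ w : Vtx X, Gsharp G ≤ R w := by
      intro w h hm
      exact (Subgroup.mem_inf.mp (Subgroup.mem_iInf.mp hm w)).2
    set I₀ : ℕ := ((Gsharp G).subgroupOf G).index with hI₀
    have hI₀0 : I₀ ≠ 0 := hGfi.index_ne_zero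
    set ν : Vtx X → ℕ := fun w => ((R w).subgroupOf G).index with hν
    have hνdvd : ∀ w : Vtx X, ν w ∣ I₀ :=
      fun w => Subgroup.index_dvd_of_le (Subgroup.comap_mono (hsharpR w))
    have hν0 : ∀ w : Vtx X, ν w ≠ 0 := fun w h0 => hI₀0 (Nat.eq_zero_of_zero_dvd (h0 ▸ hνdvd w))
    -- same level vertices have the same index
    have hlevdvd : ∀ w w' : Vtx X, w.length = w'.length → ν w' ∣ ν w := by
      intro w w' hl
      obtain ⟨f, hfG, hfw⟩ := hLT w w' hl
      obtain ⟨s, hsG, hs⟩ := hSS f hfG w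
      set e : ↥G ≃* ↥G := MulAut.conj (⟨s, hsG⟩ : G) with he
      have hle : (R w).subgroupOf G ≤ Subgroup.comap e.toMonoidHom ((R w').subgroupOf G) := by
        intro x hx
        rw [Subgroup.mem_comap]
        have hx' : vtr w (x : Equiv.Perm (Vtx X)) ∈ G := hx
        have hcoe : ((e.toMonoidHom x : ↥G) : Equiv.Perm (Vtx X)) = s * (x : Equiv.Perm (Vtx X)) * s⁻¹ := rfl
        show ((e.toMonoidHom x : ↥G) : Equiv.Perm (Vtx X)) ∈ R w'
        rw [hcoe, hRmem, ← hfw, ← conj_vtr hAut hfG w hs]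
        exact mul_mem (mul_mem hfG hx') (inv_mem hfG)
      have hcomapidx : (Subgroup.comap e.toMonoidHom ((R w').subgroupOf G)).index
          = ((R w').subgroupOf G).index :=
        Subgroup.index_comap_of_surjective _ e.surjective
      calc ν w' = (Subgroup.comap e.toMonoidHom ((R w').subgroupOf G)).index := hcomapidx.symm
        _ ∣ ν w := Subgroup.index_dvd_of_le hle
    have hleveq : ∀ w w' : Vtx X, w.length = w'.length → ν w = ν w' :=
      fun w w' hl => Nat.dvd_antisymm (hlevdvd w' w hl.symm) (hlevdvd w w' hl)
    -- the sequence d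
    set d : ℕ → ℕ := fun ℓ => ν (List.replicate ℓ x₀) with hd
    have hdmono : Monotone d := by
      refine monotone_nat_of_le_succ fun ℓ => ?_
      have hrep : List.replicate (ℓ + 1) x₀ = [x₀] ++ List.replicate ℓ x₀ := by
        rw [List.replicate_succ]; rfl
      have hle : R (List.replicate (ℓ + 1) x₀) ≤ R (List.replicate ℓ x₀) := by
        rw [hrep]; exact hRdrop [x₀] _
      exact Nat.le_of_dvd (Nat.pos_of_ne_zero (hν0 _))
        (Subgroup.index_dvd_of_le (Subgroup.comap_mono hle))
    have hdle : ∀ ℓ, d ℓ ≤ I₀ :=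
      fun ℓ => Nat.le_of_dvd (Nat.pos_of_ne_zero hI₀0) (hνdvd _)
    have hbdd : BddAbove (Set.range d) := ⟨I₀, by rintro _ ⟨ℓ, rfl⟩; exact hdle ℓ⟩
    obtain ⟨N, hN⟩ := Nat.sSup_mem (Set.range_nonempty d) hbdd
    have hconst : ∀ ℓ, N ≤ ℓ → d ℓ = d N := by
      intro ℓ hℓ
      refine le_antisymm ?_ (hdmono hℓ)
      rw [hN]
      exact le_csSup hbdd ⟨ℓ, rfl⟩
    have hνall : ∀ w : Vtx X, N ≤ w.length → ν w = d N := by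
      intro w hw
      rw [hleveq w (List.replicate w.length x₀) (by simp)]
      exact hconst w.length hw
    -- stability: R v = R (t ++ v) inside G for deep v
    have hstab : ∀ (v t : Vtx X), N ≤ v.length →
        (R v).subgroupOf G ≤ (R (t ++ v)).subgroupOf G := by
      intro v t hv
      have hAB : (R (t ++ v)).subgroupOf G ≤ (R v).subgroupOf G :=
        Subgroup.comap_mono (hRdrop t v)
      have hidx : ((R (t ++ v)).subgroupOf G).index = ((R v).subgroupOf G).index := by
        show ν (t ++ v) = ν v
        rw [hνall v hv, hνall (t ++ v) (by rw [List.length_append]; omega)]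
      have hrel := Subgroup.relIndex_mul_index hAB
      rw [hidx] at hrel
      have hrel1 : ((R (t ++ v)).subgroupOf G).relIndex ((R v).subgroupOf G) = 1 := by
        have hpos : 0 < ((R v).subgroupOf G).index := Nat.pos_of_ne_zero (hν0 v)
        nlinarith [hrel]
      exact Subgroup.relIndex_eq_one.mp hrel1
    -- conclusion
    refine ⟨N + 1, fun m => ?_⟩
    rw [ristLevel]
    refine iSup₂_le fun w hw => ?_
    intro g hg
    have hwlen : w.length = m + (N + 1) := hw
    obtain ⟨hgr, hgG⟩ := Subgroup.mem_inf.mp hg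
    have hgr' : ∀ z : Vtx X, ¬ w <+: z → g z = z := hgr
    have hwne : w ≠ [] := by
      intro h0
      rw [h0] at hwlen
      simp only [List.length_nil] at hwlen
      omega
    obtain ⟨h, rfl⟩ := rist_eq_vtr hAut hSS hgG hwne hgr'
    set u := w.take m with hu
    set v := w.drop m with hv
    have huv : u ++ v = w := List.take_append_drop m w
    have hul : u.length = m := by rw [hu, List.length_take, hwlen]; omega
    have hvl : v.length = N + 1 := by rw [hv, List.length_drop, hwlen]; omega
    have hhG : h ∈ G := by
      have := vtr_suffix_mem hSS w [] h (by rwa [List.append_nil])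
      rwa [vtr_nil] at this
    have hhRv : h ∈ R v := by
      rw [← huv] at hgG
      exact hRdrop u v hgG
    have hmemsharp : vtr v h ∈ Gsharp G := by
      refine Subgroup.mem_iInf.mpr fun t => Subgroup.mem_inf.mpr ⟨(hRmem v h).mp hhRv, ?_⟩
      have hsub : (⟨h, hhG⟩ : ↥G) ∈ (R v).subgroupOf G := hhRv
      have hmem : h ∈ R (t ++ v) := hstab v t (by omega) hsub
      have : vtr (t ++ v) h ∈ G := (hRmem _ h).mp hmem
      rw [← vtr_comp] at this
      exact Subgroup.mem_comap.mpr this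
    rw [← huv, ← vtr_comp]
    exact Subgroup.subset_closure ⟨u, hul, vtr v h, hmemsharp, rfl⟩
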